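/- arXiv:1805.03587 — 3 statements merged into one kernel-verified Lean document; each statement's English description precedes it below -/
import Mathlib

section
/- Let $(R,\mathfrak{m})$ be a commutative Noetherian local ring with $\mathfrak{m}$-adic completion $\widehat{R}$, and let $\mathcal{M}$ be a finitely generated $\widehat{R}$-module. If $\mathcal{M}$ is finitely generated as an $R$-module (via the map $R \to \widehat{R}$), then $\mathcal{M} \simeq \mathcal{M} \otimes_R \widehat{R}$ as $\widehat{R}$-modules; in particular $\mathcal{M}$ is extended from a finitely generated $R$-module. -/
open TensorProduct IsLocalRing

namespace AdicHelper

open AdicCompletion Submodule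

variable {R : Type} [CommRing R] [IsNoetherianRing R] (I : Ideal R)
variable {M : Type} [AddCommGroup M] [Module (AdicCompletion I R) M]
  [Module R M] [IsScalarTower R (AdicCompletion I R) M]

lemma of_eq_algebraMap (r : R) : of I R r = algebraMap R (AdicCompletion I R) r := rfl

lemma val_algebraMap (n : ℕ) (r : R) :
    (algebraMap R (AdicCompletion I R) r).val n = Submodule.Quotient.mk r := rfl

lemma smul_mem_of_eval_eq_zero (n : ℕ) (b : AdicCompletion I R)
    (hb : b.val n = 0) (x : M) : b • x ∈ (I ^ n • ⊤ : Submodule R M) := by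
  classical
  set g : (I ^ n : Ideal R) →ₗ[R] R := (I ^ n : Ideal R).subtype with hg
  set p : R →ₗ[R] R ⧸ (I ^ n : Ideal R) := (I ^ n : Ideal R).mkQ with hp
  have hexact : Function.Exact (AdicCompletion.map I g) (AdicCompletion.map I p) :=
    AdicCompletion.map_exact (Submodule.injective_subtype _)
      (LinearMap.exact_subtype_mkQ _) (Submodule.mkQ_surjective _)
  obtain ⟨a, rfl⟩ := mk_surjective I R b
  have ha : a.val n ∈ (I ^ n • ⊤ : Submodule R R) := by
    rwa [← Submodule.Quotient.mk_eq_zero]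
  have hb0 : AdicCompletion.map I p (mk I R a) = 0 := by
    ext k
    rw [map_mk]
    show Submodule.Quotient.mk (p (a.val k)) = 0
    rw [Submodule.Quotient.mk_eq_zero]
    rcases le_total k n with hkn | hnk
    · have h1 : a.val k - a.val n ∈ (I ^ k • ⊤ : Submodule R R) :=
        (SModEq.sub_mem).mp (a.property hkn)
      have h2 : a.val n ∈ (I ^ k • ⊤ : Submodule R R) :=
        Submodule.smul_mono (Ideal.pow_le_pow_right hkn) le_rfl ha
      have h3 : a.val k ∈ (I ^ k • ⊤ : Submodule R R) := by
        have := add_mem h1 h2; simpa using this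
      have := Submodule.mem_map_of_mem (f := p) h3
      rw [Submodule.map_smul''] at this
      exact Submodule.smul_mono le_rfl le_top this
    · have h1 : a.val n - a.val k ∈ (I ^ n • ⊤ : Submodule R R) :=
        (SModEq.sub_mem).mp (a.property hnk)
      have h3 : a.val k ∈ (I ^ n • ⊤ : Submodule R R) := by
        have := sub_mem ha h1; simpa using this
      have h4 : a.val k ∈ (I ^ n : Ideal R) := by
        simpa using h3
      have : p (a.val k) = 0 := by
        rw [hp, Submodule.mkQ_apply, Submodule.Quotient.mk_eq_zero]
        exact h4
      rw [this]
      exact zero_mem _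
  obtain ⟨c, hc⟩ := (hexact _).mp hb0
  have : Module.Finite R (I ^ n : Ideal R) := inferInstance
  obtain ⟨t, ht⟩ := ofTensorProduct_surjective_of_finite I (I ^ n : Ideal R) c
  rw [← hc, ← ht]
  clear hc ht hb0 ha
  induction t with
  | zero => simp
  | add t₁ t₂ h₁ h₂ => rw [map_add, map_add, add_smul]; exact add_mem h₁ h₂
  | tmul r y =>
      have hnat : AdicCompletion.map I g (ofTensorProduct I (I ^ n : Ideal R) (r ⊗ₜ y)) =
          ofTensorProduct I R (r ⊗ₜ (g y)) := by
        have := ofTensorProduct_naturality I g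
        have := congrArg (fun φ => φ (r ⊗ₜ y)) (congrArg DFunLike.coe this)
        simpa using this
      rw [hnat, ofTensorProduct_tmul, of_eq_algebraMap]
      change (r * algebraMap R (AdicCompletion I R) (g y)) • x ∈ _
      rw [mul_comm, mul_smul,
        algebraMap_smul]
      exact Submodule.smul_mem_smul y.2 Submodule.mem_top

lemma of_smul (a : AdicCompletion I R) (x : M) :
    of I M (a • x) = a • of I M x := by
  obtain ⟨s, rfl⟩ := mk_surjective I R a
  ext n
  show Submodule.Quotient.mk ((mk I R s) • x) = ((mk I R s).val n) • Submodule.Quotient.mk x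
  have h1 : ((mk I R s).val n) • (Submodule.Quotient.mk x : M ⧸ (I ^ n • ⊤ : Submodule R M)) =
      Submodule.Quotient.mk ((s.val n) • x) := by
    show Ideal.Quotient.mk (I ^ n • ⊤ : Ideal R) (s.val n) • (Submodule.Quotient.mk x) = _
    rw [mk_smul_mk, Submodule.Quotient.mk_smul]
  rw [h1, Submodule.Quotient.eq]
  have : (mk I R s) • x - (s.val n) • x =
      ((mk I R s) - algebraMap R (AdicCompletion I R) (s.val n)) • x := by
    rw [sub_smul, algebraMap_smul]
  rw [this]
  apply smul_mem_of_eval_eq_zero I n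
  rw [AdicCompletion.val_sub]
  exact sub_eq_zero_of_eq (a := ((mk I R s).val n)) rfl

end AdicHelper

/-- A finitely generated module over the completion `R̂` that is finitely generated
already over `R` is extended: `M ⊗_R R̂ ≃ M`. -/
theorem stmt_0 (R : Type) [CommRing R] [IsLocalRing R] [IsNoetherianRing R]
    (M : Type) [AddCommGroup M]
    [Module (AdicCompletion (maximalIdeal R) R) M]
    [Module R M] [IsScalarTower R (AdicCompletion (maximalIdeal R) R) M]
    [Module.Finite (AdicCompletion (maximalIdeal R) R) M]
    (hfg : Module.Finite R M) :
    Nonempty ((AdicCompletion (maximalIdeal R) R ⊗[R] M)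
        ≃ₗ[AdicCompletion (maximalIdeal R) R] M) ∧
    ∃ (N : Type) (_ : AddCommGroup N) (_ : Module R N), Module.Finite R N ∧
      Nonempty ((AdicCompletion (maximalIdeal R) R ⊗[R] N)
        ≃ₗ[AdicCompletion (maximalIdeal R) R] M) := by
  haveI := hfg
  let f : AdicCompletion (maximalIdeal R) R ⊗[R] M →ₗ[AdicCompletion (maximalIdeal R) R] M :=
    LinearMap.liftBaseChange (AdicCompletion (maximalIdeal R) R)
      (LinearMap.id (R := R) (M := M))
  have hf : ∀ (a : AdicCompletion (maximalIdeal R) R) (x : M), f (a ⊗ₜ x) = a • x := by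
    intro a x
    simp only [f, LinearMap.liftBaseChange_tmul, LinearMap.id_apply]
  have hcomm : ∀ t, AdicCompletion.of (maximalIdeal R) M (f t) =
      AdicCompletion.ofTensorProduct (maximalIdeal R) M t := by
    intro t
    induction t with
    | zero => simp
    | add t₁ t₂ h₁ h₂ => rw [map_add, map_add, map_add, h₁, h₂]
    | tmul a x =>
        rw [hf, AdicHelper.of_smul, AdicCompletion.ofTensorProduct_tmul]
  have hinj : Function.Injective f := by
    intro t₁ t₂ h
    exact (AdicCompletion.ofTensorProduct_bijective_of_finite_of_isNoetherian
      (maximalIdeal R) M).injective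
      (by rw [← hcomm, ← hcomm, h])
  have hsurj : Function.Surjective f := fun x =>
    ⟨1 ⊗ₜ x, by rw [hf, one_smul]⟩
  have e : (AdicCompletion (maximalIdeal R) R ⊗[R] M)
      ≃ₗ[AdicCompletion (maximalIdeal R) R] M :=
    LinearEquiv.ofBijective f ⟨hinj, hsurj⟩
  exact ⟨⟨e⟩, M, inferInstance, inferInstance, hfg, ⟨e⟩⟩
end

section
/- Let $R$ be a countable Noetherian local ring with $\dim R > 1$ such that $\widehat{R}$ has uncountably many height-one prime ideals. Then there exists a finitely generated $\widehat{R}$-module that is not a direct summand of any module extended from a finitely generated $R$-module. -/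
open TensorProduct IsLocalRing

set_option linter.unusedSectionVars false
suppress_compilation

namespace Stmt10Aux

open AdicCompletion Submodule

variable {R : Type} [CommRing R] (I : Ideal R)

/-- The ideal of elements of the adic completion vanishing at level 1. -/
def Kdl : Ideal (AdicCompletion I R) where
  carrier := {b | b.val 1 = 0}
  add_mem' := by
    intro a b ha hb
    simp only [Set.mem_setOf_eq] at *
    rw [AdicCompletion.val_add_apply, ha, hb, add_zero]
  zero_mem' := rfl
  smul_mem' := by
    intro c x hx
    simp only [Set.mem_setOf_eq, smul_eq_mul] at *
    rw [AdicCompletion.val_mul, hx, mul_zero]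

theorem mem_Kdl_iff {b : AdicCompletion I R} : b ∈ Kdl I ↔ b.val 1 = 0 := Iff.rfl

theorem pow_one_smul_top : (I ^ 1 • ⊤ : Ideal R) = I := by
  rw [pow_one, smul_eq_mul, Ideal.mul_top]

theorem algebraMap_val (r : R) (n : ℕ) :
    (algebraMap R (AdicCompletion I R) r).val n = Ideal.Quotient.mk (I ^ n • ⊤ : Ideal R) r := rfl

theorem algebraMap_mem_Kdl {r : R} (hr : r ∈ I) :
    algebraMap R (AdicCompletion I R) r ∈ Kdl I := by
  rw [mem_Kdl_iff, algebraMap_val, Ideal.Quotient.eq_zero_iff_mem, pow_one_smul_top]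
  exact hr

theorem algebraMap_mem_Kdl_pow {r : R} {m : ℕ} (hr : r ∈ I ^ m) :
    algebraMap R (AdicCompletion I R) r ∈ Kdl I ^ m := by
  have h1 : Ideal.map (algebraMap R (AdicCompletion I R)) I ≤ Kdl I := by
    rw [Ideal.map_le_iff_le_comap]
    intro s hs
    exact algebraMap_mem_Kdl I hs
  have h2 : algebraMap R (AdicCompletion I R) r ∈
      Ideal.map (algebraMap R (AdicCompletion I R)) (I ^ m) :=
    Ideal.mem_map_of_mem _ hr
  rw [Ideal.map_pow] at h2
  exact Ideal.pow_right_mono h1 m h2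

/-- values of elements of `Kdl ^ m` lie in the image of `I ^ m`. -/
theorem val_mem_of_mem_Kdl_pow {m : ℕ} {b : AdicCompletion I R} (hb : b ∈ Kdl I ^ m) (n : ℕ) :
    b.val n ∈ Ideal.map (Ideal.Quotient.mk (I ^ n • ⊤ : Ideal R)) (I ^ m) := by
  induction m generalizing b with
  | zero =>
    rw [pow_zero, Ideal.one_eq_top, Ideal.map_top]
    trivial
  | succ m ih =>
    rw [pow_succ] at hb
    refine Submodule.mul_induction_on hb (fun a ha c hc => ?_) (fun x y hx hy => ?_)
    · rw [AdicCompletion.val_mul]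
      have h1 : a.val n ∈ Ideal.map (Ideal.Quotient.mk (I ^ n • ⊤ : Ideal R)) (I ^ m) := ih ha
      have h2 : c.val n ∈ Ideal.map (Ideal.Quotient.mk (I ^ n • ⊤ : Ideal R)) I := by
        obtain ⟨r, hr⟩ := Submodule.Quotient.mk_surjective _ (c.val n)
        have hr' : (Ideal.Quotient.mk (I ^ n • ⊤ : Ideal R)) r = c.val n := hr
        rcases Nat.eq_zero_or_pos n with hn | hn
        · subst hn
          have : Subsingleton (R ⧸ (I ^ 0 • ⊤ : Ideal R)) := by
            rw [pow_zero, Ideal.one_eq_top, top_smul]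
            infer_instance
          rw [Subsingleton.elim (c.val 0) 0]
          exact Ideal.zero_mem _
        · have htr := c.property (show 1 ≤ n from hn)
          rw [← hr', AdicCompletion.transitionMap_ideal_mk I] at htr
          have hc1 : c.val 1 = 0 := hc
          rw [hc1] at htr
          have : r ∈ (I ^ 1 • ⊤ : Ideal R) := Ideal.Quotient.eq_zero_iff_mem.mp htr
          rw [pow_one_smul_top] at this
          rw [← hr']
          exact Ideal.mem_map_of_mem _ this
      have := Ideal.mul_mem_mul h1 h2
      rwa [← Ideal.map_mul, ← pow_succ] at this
    · rw [AdicCompletion.val_add]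
      exact Ideal.add_mem _ hx hy

variable (M : Type) [AddCommGroup M] [Module R M]

theorem val_eq_zero_of_mem_smul {m : ℕ} {x : AdicCompletion I M}
    (hx : x ∈ (Kdl I ^ m • ⊤ : Submodule (AdicCompletion I R) (AdicCompletion I M))) :
    x.val m = 0 := by
  refine Submodule.smul_induction_on hx (fun b hb y _ => ?_) (fun y z hy hz => ?_)
  · rw [AdicCompletion.smul_eval]
    obtain ⟨s, hs, hsb⟩ := Ideal.mem_map_iff_of_surjective _
      Ideal.Quotient.mk_surjective |>.mp (val_mem_of_mem_Kdl_pow I hb m)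
    obtain ⟨z, hz⟩ := Submodule.Quotient.mk_surjective _ (y.val m)
    rw [← hsb, ← hz, AdicCompletion.mk_smul_mk, ← Submodule.Quotient.mk_smul,
      Submodule.Quotient.mk_eq_zero]
    exact Submodule.smul_mem_smul hs Submodule.mem_top
  · rw [AdicCompletion.val_add_apply, hy, hz, add_zero]

theorem of_mem_smul {m : ℕ} {v : M} (hv : v ∈ (I ^ m • ⊤ : Submodule R M)) :
    of I M v ∈ (Kdl I ^ m • ⊤ : Submodule (AdicCompletion I R) (AdicCompletion I M)) := by
  refine Submodule.smul_induction_on hv (fun r hr y _ => ?_) (fun y z hy hz => ?_)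
  · rw [map_smul, ← algebraMap_smul (AdicCompletion I R) r (of I M y)]
    exact Submodule.smul_mem_smul (algebraMap_mem_Kdl_pow I hr) Submodule.mem_top
  · rw [map_add]
    exact Submodule.add_mem _ hy hz

theorem map_of_eq_of {N : Type} [AddCommGroup N] [Module R N] (f : N →ₗ[R] M) (y : N) :
    AdicCompletion.map I f (of I N y) = of I M (f y) := by
  ext n
  rw [AdicCompletion.map_val_apply]
  simp only [of_apply, Submodule.mkQ_apply]
  rw [LinearMap.reduceModIdeal_apply]

theorem mem_smul_of_val_eq_zero [IsNoetherianRing R] [Module.Finite R M] {m : ℕ}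
    {x : AdicCompletion I M} (hx : x.val m = 0) :
    x ∈ (Kdl I ^ m • ⊤ : Submodule (AdicCompletion I R) (AdicCompletion I M)) := by
  set N : Submodule R M := (I ^ m • ⊤ : Submodule R M) with hN
  haveI : Module.Finite R N := Module.Finite.iff_fg.mpr (IsNoetherian.noetherian N)
  have hexact := AdicCompletion.map_exact (I := I) (Submodule.injective_subtype N)
    (LinearMap.exact_subtype_mkQ N) (Submodule.mkQ_surjective N)
  have h0 : AdicCompletion.map I (Submodule.mkQ N) x = 0 := by
    ext n
    rw [AdicCompletion.map_val_apply, AdicCompletion.val_zero_apply]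
    rcases le_total m n with hmn | hnm
    · obtain ⟨y, hy⟩ := Submodule.Quotient.mk_surjective _ (x.val n)
      have hym : Submodule.Quotient.mk (p := N) y = 0 := by
        have := x.property hmn
        rw [← hy, Submodule.mapQ_apply, LinearMap.id_apply] at this
        rw [hx] at this
        rwa [Submodule.Quotient.mk_eq_zero] at this ⊢
      rw [← hy, LinearMap.reduceModIdeal_apply]
      have : Submodule.mkQ N y = 0 := hym
      rw [this]
      simp
    · have := x.property hnm
      rw [hx, _root_.map_zero] at this
      rw [← this, _root_.map_zero]
  obtain ⟨z, hz⟩ := (hexact x).mp h0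
  obtain ⟨w, hw⟩ := AdicCompletion.ofTensorProduct_surjective_of_finite I N z
  rw [← hz, ← hw]
  clear hz hw hx
  induction w with
  | zero => rw [_root_.map_zero, _root_.map_zero]; exact Submodule.zero_mem _
  | tmul a v =>
    rw [AdicCompletion.ofTensorProduct_tmul, map_smul, map_of_eq_of]
    exact Submodule.smul_mem _ a (of_mem_smul I M v.2)
  | add w₁ w₂ h₁ h₂ =>
    rw [map_add, map_add]
    exact Submodule.add_mem _ h₁ h₂

section Part3

variable {R : Type} [CommRing R] (I : Ideal R)
variable (M : Type) [AddCommGroup M] [Module R M]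

theorem end_preserves (h : AdicCompletion I M →ₗ[AdicCompletion I R] AdicCompletion I M)
    {J : Ideal (AdicCompletion I R)} {x : AdicCompletion I M}
    (hx : x ∈ (J • ⊤ : Submodule (AdicCompletion I R) (AdicCompletion I M))) :
    h x ∈ (J • ⊤ : Submodule (AdicCompletion I R) (AdicCompletion I M)) := by
  refine Submodule.smul_induction_on hx (fun b hb y _ => ?_) (fun y z hy hz => ?_)
  · rw [map_smul]
    exact Submodule.smul_mem_smul hb Submodule.mem_top
  · rw [map_add]
    exact Submodule.add_mem _ hy hz

theorem smul_mem_pow_smul {i j : ℕ} {r : AdicCompletion I R} (hr : r ∈ Kdl I ^ i)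
    {w : AdicCompletion I M}
    (hw : w ∈ (Kdl I ^ j • ⊤ : Submodule (AdicCompletion I R) (AdicCompletion I M))) :
    r • w ∈ (Kdl I ^ (i + j) • ⊤ : Submodule (AdicCompletion I R) (AdicCompletion I M)) := by
  refine Submodule.smul_induction_on hw (fun s hs z _ => ?_) (fun y z hy hz => ?_)
  · rw [← mul_smul]
    refine Submodule.smul_mem_smul ?_ Submodule.mem_top
    rw [pow_add]
    exact Ideal.mul_mem_mul hr hs
  · rw [smul_add]
    exact Submodule.add_mem _ hy hz

theorem pow_apply_mem (φ : Module.End (AdicCompletion I R) (AdicCompletion I M))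
    (hφ : ∀ x, φ x ∈ (Kdl I • ⊤ : Submodule (AdicCompletion I R) (AdicCompletion I M)))
    (j : ℕ) (x : AdicCompletion I M) :
    (φ ^ j) x ∈ (Kdl I ^ j • ⊤ : Submodule (AdicCompletion I R) (AdicCompletion I M)) := by
  induction j generalizing x with
  | zero =>
    rw [pow_zero, Ideal.one_eq_top, top_smul, pow_zero]
    exact Submodule.mem_top
  | succ j ih =>
    rw [pow_succ' φ j, Module.End.mul_apply]
    have hx : (φ ^ j) x ∈ (Kdl I ^ j • ⊤ :
        Submodule (AdicCompletion I R) (AdicCompletion I M)) := ih x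
    refine Submodule.smul_induction_on hx (fun s hs z _ => ?_) (fun y z hy hz => ?_)
    · rw [map_smul]
      have h1 : φ z ∈ (Kdl I ^ 1 • ⊤ :
          Submodule (AdicCompletion I R) (AdicCompletion I M)) := by
        rw [pow_one]; exact hφ z
      exact smul_mem_pow_smul I M hs h1
    · rw [map_add]
      exact Submodule.add_mem _ hy hz

variable [IsNoetherianRing R] [Module.Finite R M]

/-- Partial geometric sums. -/
noncomputable def geomS (φ : Module.End (AdicCompletion I R) (AdicCompletion I M)) (k : ℕ) :
    Module.End (AdicCompletion I R) (AdicCompletion I M) :=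
  ∑ i ∈ Finset.range k, (-φ) ^ i

theorem geomS_stable (φ : Module.End (AdicCompletion I R) (AdicCompletion I M))
    (hφ : ∀ x, φ x ∈ (Kdl I • ⊤ : Submodule (AdicCompletion I R) (AdicCompletion I M)))
    {m n : ℕ} (hmn : m ≤ n) (x : AdicCompletion I M) :
    ((geomS I M φ n) x).val m = ((geomS I M φ m) x).val m := by
  have hneg : ∀ x, (-φ) x ∈ (Kdl I • ⊤ :
      Submodule (AdicCompletion I R) (AdicCompletion I M)) := by
    intro x
    rw [LinearMap.neg_apply]
    exact Submodule.neg_mem _ (hφ x)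
  have hIco : (∑ i ∈ Finset.Ico m n, (-φ) ^ i) = geomS I M φ n - geomS I M φ m :=
    Finset.sum_Ico_eq_sub _ hmn
  have hmem : ((geomS I M φ n - geomS I M φ m) x) ∈ (Kdl I ^ m • ⊤ :
      Submodule (AdicCompletion I R) (AdicCompletion I M)) := by
    rw [← hIco, LinearMap.sum_apply]
    refine Submodule.sum_mem _ (fun i hi => ?_)
    have him : m ≤ i := (Finset.mem_Ico.mp hi).1
    exact Submodule.smul_mono_left (Ideal.pow_le_pow_right him) (pow_apply_mem I M _ hneg i x)
  have := val_eq_zero_of_mem_smul I M hmem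
  rw [LinearMap.sub_apply, AdicCompletion.val_sub_apply, sub_eq_zero] at this
  exact this

/-- The geometric series inverse of `1 + φ`. -/
noncomputable def geomInv (φ : Module.End (AdicCompletion I R) (AdicCompletion I M))
    (hφ : ∀ x, φ x ∈ (Kdl I • ⊤ : Submodule (AdicCompletion I R) (AdicCompletion I M))) :
    Module.End (AdicCompletion I R) (AdicCompletion I M) where
  toFun x := ⟨fun k => ((geomS I M φ k) x).val k, by
    intro m n hmn
    show AdicCompletion.transitionMap I M hmn (((geomS I M φ n) x).val n)
      = ((geomS I M φ m) x).val m
    rw [((geomS I M φ n) x).property hmn]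
    exact geomS_stable I M φ hφ hmn x⟩
  map_add' x y := by
    ext k
    show ((geomS I M φ k) (x + y)).val k = _
    rw [map_add, AdicCompletion.val_add]
    rfl
  map_smul' a x := by
    ext k
    show ((geomS I M φ k) (a • x)).val k = _
    rw [map_smul, AdicCompletion.smul_eval]
    rfl

theorem geomInv_val (φ : Module.End (AdicCompletion I R) (AdicCompletion I M))
    (hφ : ∀ x, φ x ∈ (Kdl I • ⊤ : Submodule (AdicCompletion I R) (AdicCompletion I M)))
    (x : AdicCompletion I M) (k : ℕ) :
    ((geomInv I M φ hφ) x).val k = ((geomS I M φ k) x).val k := rfl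

theorem one_add_mul_geomS (φ : Module.End (AdicCompletion I R) (AdicCompletion I M)) (m : ℕ) :
    (1 + φ) * geomS I M φ m = 1 - (-φ) ^ m := by
  have h := mul_geom_sum (-φ) m
  have h2 : (-φ - 1) = -(1 + φ) := by abel
  rw [h2, neg_mul] at h
  have := congrArg Neg.neg h
  rw [neg_neg, neg_sub] at this
  exact this

theorem geomS_mul_one_add (φ : Module.End (AdicCompletion I R) (AdicCompletion I M)) (m : ℕ) :
    geomS I M φ m * (1 + φ) = 1 - (-φ) ^ m := by
  have h := geom_sum_mul (-φ) m
  have h2 : (-φ - 1) = -(1 + φ) := by abel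
  rw [h2, mul_neg] at h
  have := congrArg Neg.neg h
  rw [neg_neg, neg_sub] at this
  exact this

theorem exists_geom_inverse (φ : Module.End (AdicCompletion I R) (AdicCompletion I M))
    (hφ : ∀ x, φ x ∈ (Kdl I • ⊤ : Submodule (AdicCompletion I R) (AdicCompletion I M))) :
    ∃ ψ : Module.End (AdicCompletion I R) (AdicCompletion I M),
      (1 + φ) * ψ = 1 ∧ ψ * (1 + φ) = 1 := by
  have hneg : ∀ x, (-φ) x ∈ (Kdl I • ⊤ :
      Submodule (AdicCompletion I R) (AdicCompletion I M)) := by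
    intro x
    rw [LinearMap.neg_apply]
    exact Submodule.neg_mem _ (hφ x)
  refine ⟨geomInv I M φ hφ, ?_, ?_⟩
  · apply LinearMap.ext
    intro x
    ext m
    have hd : (geomInv I M φ hφ x - (geomS I M φ m) x).val m = 0 := by
      rw [AdicCompletion.val_sub_apply, geomInv_val, sub_self]
    have hdm := mem_smul_of_val_eq_zero I M hd
    have h1 : ((1 + φ) (geomInv I M φ hφ x - (geomS I M φ m) x)).val m = 0 :=
      val_eq_zero_of_mem_smul I M (end_preserves I M _ hdm)
    rw [map_sub, AdicCompletion.val_sub_apply, sub_eq_zero] at h1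
    rw [Module.End.mul_apply, Module.End.one_apply, h1, ← Module.End.mul_apply,
      one_add_mul_geomS]
    rw [LinearMap.sub_apply, Module.End.one_apply, AdicCompletion.val_sub_apply]
    have h2 : (((-φ) ^ m) x).val m = 0 :=
      val_eq_zero_of_mem_smul I M (pow_apply_mem I M _ hneg m x)
    rw [h2, sub_zero]
  · apply LinearMap.ext
    intro x
    ext m
    rw [Module.End.mul_apply, Module.End.one_apply, geomInv_val, ← Module.End.mul_apply,
      geomS_mul_one_add]
    rw [LinearMap.sub_apply, Module.End.one_apply, AdicCompletion.val_sub_apply]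
    have h2 : (((-φ) ^ m) x).val m = 0 :=
      val_eq_zero_of_mem_smul I M (pow_apply_mem I M _ hneg m x)
    rw [h2, sub_zero]

end Part3

section Part4

variable {R : Type} [CommRing R] (I : Ideal R)
variable (M : Type) [AddCommGroup M] [Module R M] [IsNoetherianRing R] [Module.Finite R M]

theorem range_iso_of_idem
    (e f : Module.End (AdicCompletion I R) (AdicCompletion I M))
    (he : e * e = e) (hf : f * f = f)
    (h : ∀ x, (e - f) x ∈ (Kdl I • ⊤ :
      Submodule (AdicCompletion I R) (AdicCompletion I M))) :
    Nonempty (↥(LinearMap.range e) ≃ₗ[AdicCompletion I R] ↥(LinearMap.range f)) := by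
  set u := f * e + (1 - f) * (1 - e) with hu_def
  have hue : u * e = f * e := by
    have h1 : (1 - e) * e = 0 := by
      rw [sub_mul, one_mul, he, sub_self]
    rw [hu_def, add_mul, mul_assoc, mul_assoc, he, h1, mul_zero, add_zero]
  have hfu : f * u = f * e := by
    have h2 : f * (1 - f) = 0 := by
      rw [mul_sub, mul_one, hf, sub_self]
    rw [hu_def, mul_add, ← mul_assoc, hf, ← mul_assoc, h2, zero_mul, add_zero]
  have hphi : ∀ x, (u - 1) x ∈ (Kdl I • ⊤ :
      Submodule (AdicCompletion I R) (AdicCompletion I M)) := by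
    intro x
    have hee : e (e x) = e x := by
      conv_lhs => rw [← Module.End.mul_apply, he]
    have hff : f (f x) = f x := by
      conv_lhs => rw [← Module.End.mul_apply, hf]
    have heq : (u - 1) x = f ((e - f) x) + (f - e) (e x) := by
      simp only [hu_def, LinearMap.sub_apply, LinearMap.add_apply, Module.End.mul_apply,
        Module.End.one_apply, map_sub]
      rw [hee, hff]
      abel
    rw [heq]
    refine Submodule.add_mem _ (end_preserves I M f (h x)) ?_
    have hneg : (f - e) (e x) = -((e - f) (e x)) := by
      simp only [LinearMap.sub_apply, neg_sub]
    rw [hneg]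
    exact Submodule.neg_mem _ (h (e x))
  obtain ⟨v, hv1, hv2⟩ := exists_geom_inverse I M (u - 1) hphi
  have hu1 : 1 + (u - 1) = u := by abel
  rw [hu1] at hv1 hv2
  let U : AdicCompletion I M ≃ₗ[AdicCompletion I R] AdicCompletion I M :=
    LinearEquiv.ofLinear u v
      (by rw [← Module.End.mul_eq_comp, hv1, Module.End.one_eq_id])
      (by rw [← Module.End.mul_eq_comp, hv2, Module.End.one_eq_id])
  have hUcoe : (U : AdicCompletion I M →ₗ[AdicCompletion I R] AdicCompletion I M) = u := rfl
  have hrange : (LinearMap.range e).map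
      (U : AdicCompletion I M →ₗ[AdicCompletion I R] AdicCompletion I M)
      = LinearMap.range f := by
    rw [← LinearMap.range_comp, hUcoe]
    have hcomp : u ∘ₗ e = f ∘ₗ u := by
      rw [← Module.End.mul_eq_comp, ← Module.End.mul_eq_comp, hue, hfu]
    rw [hcomp, LinearMap.range_comp, ← hUcoe, LinearEquiv.range, Submodule.map_top]
  exact ⟨(U.submoduleMap (LinearMap.range e)).trans (LinearEquiv.ofEq _ _ hrange)⟩

end Part4

section Part5

variable {A : Type} [CommRing A]
variable {W C E : Type} [AddCommGroup W] [AddCommGroup C] [AddCommGroup E]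
variable [Module A W] [Module A C] [Module A E]

/-- The idempotent associated with a direct sum decomposition. -/
def idemOf (g : (W × C) ≃ₗ[A] E) : Module.End A E :=
  g.toLinearMap ∘ₗ (LinearMap.inl A W C ∘ₗ LinearMap.fst A W C) ∘ₗ g.symm.toLinearMap

theorem idemOf_idem (g : (W × C) ≃ₗ[A] E) : idemOf g * idemOf g = idemOf g := by
  apply LinearMap.ext
  intro x
  simp [idemOf, Module.End.mul_apply]

theorem summand_iso_range_idemOf (g : (W × C) ≃ₗ[A] E) :
    Nonempty (W ≃ₗ[A] ↥(LinearMap.range (idemOf g))) := by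
  set j : W →ₗ[A] E := g.toLinearMap ∘ₗ LinearMap.inl A W C with hj_def
  have hj : Function.Injective j := by
    intro a b hab
    have := g.injective hab
    exact congrArg Prod.fst this
  have hrange : LinearMap.range j = LinearMap.range (idemOf g) := by
    have hs : LinearMap.range ((LinearMap.fst A W C) ∘ₗ g.symm.toLinearMap) = ⊤ := by
      rw [LinearMap.range_eq_top]
      refine Function.Surjective.comp (g := ⇑(LinearMap.fst A W C)) (fun w => ⟨(w, 0), rfl⟩)
        g.symm.surjective
    have hcomp : idemOf g = j ∘ₗ ((LinearMap.fst A W C) ∘ₗ g.symm.toLinearMap) := by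
      apply LinearMap.ext
      intro x
      simp [idemOf, hj_def]
    rw [hcomp, LinearMap.range_comp_of_range_eq_top _ hs]
  exact ⟨(LinearEquiv.ofInjective j hj).trans (LinearEquiv.ofEq _ _ hrange)⟩

theorem ideal_eq_of_quotEquiv {P Q : Ideal A} (h : (A ⧸ P) ≃ₗ[A] (A ⧸ Q)) : P = Q := by
  have key : ∀ (P Q : Ideal A), ((A ⧸ P) ≃ₗ[A] (A ⧸ Q)) → P ≤ Q := by
    intro P Q h a ha
    have h1 : a • (h.symm (Submodule.Quotient.mk 1)) = 0 := by
      obtain ⟨b, hb⟩ := Submodule.Quotient.mk_surjective P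
        (h.symm (Submodule.Quotient.mk (1 : A)))
      rw [← hb, ← Submodule.Quotient.mk_smul, Submodule.Quotient.mk_eq_zero]
      rw [smul_eq_mul]
      exact Ideal.mul_mem_right b P ha
    have h2 := congrArg h h1
    rw [map_smul, LinearEquiv.apply_symm_apply, _root_.map_zero] at h2
    rwa [← Submodule.Quotient.mk_smul, smul_eq_mul, mul_one,
      Submodule.Quotient.mk_eq_zero] at h2
  exact le_antisymm (key P Q h) (key Q P h.symm)

end Part5

section Part6

variable (R : Type) [CommRing R]

/-- Index type for a countable family covering all iso classes of f.g. `R`-modules. -/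
abbrev ModIdx : Type := Σ n : ℕ, Σ k : ℕ, (Fin k → (Fin n → R))

/-- A concrete family of finitely generated `R`-modules. -/
def ModOf (i : ModIdx R) : Type :=
  (Fin i.1 → R) ⧸ (Submodule.span R (Set.range i.2.2))

instance (i : ModIdx R) : AddCommGroup (ModOf R i) :=
  inferInstanceAs (AddCommGroup ((Fin i.1 → R) ⧸ (Submodule.span R (Set.range i.2.2))))

instance (i : ModIdx R) : Module R (ModOf R i) :=
  inferInstanceAs (Module R ((Fin i.1 → R) ⧸ (Submodule.span R (Set.range i.2.2))))

instance (i : ModIdx R) : Module.Finite R (ModOf R i) :=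
  Module.Finite.of_surjective
    (Submodule.mkQ (Submodule.span R (Set.range i.2.2)))
    (Submodule.Quotient.mk_surjective _)

instance [Countable R] (i : ModIdx R) : Countable (ModOf R i) :=
  (Submodule.Quotient.mk_surjective (Submodule.span R (Set.range i.2.2))).countable

theorem exists_modOf_equiv [IsNoetherianRing R] (M : Type) [AddCommGroup M] [Module R M]
    [Module.Finite R M] : ∃ i : ModIdx R, Nonempty ((ModOf R i) ≃ₗ[R] M) := by
  obtain ⟨n, f, hf⟩ := Module.Finite.exists_fin' R M
  have hker : (LinearMap.ker f).FG := IsNoetherian.noetherian _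
  obtain ⟨k, v, hv⟩ := Submodule.fg_iff_exists_fin_generating_family.mp hker
  refine ⟨⟨n, k, v⟩, ⟨?_⟩⟩
  exact (Submodule.quotEquivOfEq _ _ hv).trans (f.quotKerEquivOfSurjective hf)

/-- Canonical generators of `ModOf R i`. -/
noncomputable def gens (i : ModIdx R) : Fin i.1 → ModOf R i :=
  fun t => Submodule.Quotient.mk (Pi.basisFun R (Fin i.1) t)

theorem span_gens (i : ModIdx R) : Submodule.span R (Set.range (gens R i)) = ⊤ := by
  have h : Set.range (gens R i) =
      (Submodule.mkQ (Submodule.span R (Set.range i.2.2))) ''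
        (Set.range (Pi.basisFun R (Fin i.1))) := by
    rw [← Set.range_comp]
    rfl
  rw [h]
  show Submodule.span R ((Submodule.mkQ (Submodule.span R (Set.range i.2.2))) ''
    (Set.range (Pi.basisFun R (Fin i.1)))) =
    (⊤ : Submodule R ((Fin i.1 → R) ⧸ Submodule.span R (Set.range i.2.2)))
  rw [Submodule.span_image (Submodule.mkQ (Submodule.span R (Set.range i.2.2))), (Pi.basisFun R (Fin i.1)).span_eq, Submodule.map_top,
    Submodule.range_mkQ]

end Part6

section Part7

variable {R : Type} [CommRing R] (I : Ideal R)

theorem span_of_image_top [IsNoetherianRing R] (M : Type) [AddCommGroup M] [Module R M]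
    [Module.Finite R M] {s : Set M} (hs : Submodule.span R s = ⊤) :
    Submodule.span (AdicCompletion I R) (of I M '' s) = ⊤ := by
  rw [eq_top_iff]
  rintro x -
  obtain ⟨w, rfl⟩ := AdicCompletion.ofTensorProduct_surjective_of_finite I M x
  induction w with
  | zero =>
    rw [_root_.map_zero]
    exact Submodule.zero_mem _
  | tmul a m =>
    rw [AdicCompletion.ofTensorProduct_tmul]
    refine Submodule.smul_mem _ a ?_
    have hm : m ∈ Submodule.span R s := by rw [hs]; trivial
    refine Submodule.span_induction (fun y hy => ?_) ?_ (fun y z _ _ hy hz => ?_)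
      (fun r y _ hy => ?_) hm
    · exact Submodule.subset_span ⟨y, hy, rfl⟩
    · rw [_root_.map_zero]
      exact Submodule.zero_mem _
    · rw [map_add]
      exact Submodule.add_mem _ hy hz
    · rw [map_smul, ← algebraMap_smul (AdicCompletion I R) r (of I M y)]
      exact Submodule.smul_mem _ _ hy
  | add w1 w2 h1 h2 =>
    rw [map_add]
    exact Submodule.add_mem _ h1 h2

/-- Reduction of the completion mod the level-one kernel ideal. -/
def QK (M : Type) [AddCommGroup M] [Module R M] : Type :=
  (AdicCompletion I M) ⧸
    ((Kdl I • ⊤) : Submodule (AdicCompletion I R) (AdicCompletion I M))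

instance (M : Type) [AddCommGroup M] [Module R M] : AddCommGroup (QK I M) :=
  inferInstanceAs (AddCommGroup ((AdicCompletion I M) ⧸
    ((Kdl I • ⊤) : Submodule (AdicCompletion I R) (AdicCompletion I M))))

theorem QK_countable [IsNoetherianRing R] (M : Type) [AddCommGroup M] [Module R M]
    [Module.Finite R M] [Countable M] : Countable (QK I M) := by
  haveI : Countable (M ⧸ (I ^ 1 • ⊤ : Submodule R M)) :=
    (Submodule.Quotient.mk_surjective _).countable
  set p : Submodule (AdicCompletion I R) (AdicCompletion I M) := Kdl I • ⊤ with hp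
  have hmem : ∀ x : AdicCompletion I M, x ∈ p ↔ x.val 1 = 0 := by
    intro x
    constructor
    · intro hx
      have : x ∈ (Kdl I ^ 1 • ⊤ :
          Submodule (AdicCompletion I R) (AdicCompletion I M)) := by
        rwa [pow_one]
      exact val_eq_zero_of_mem_smul I M this
    · intro hx
      have := mem_smul_of_val_eq_zero I M (m := 1) hx
      rwa [pow_one] at this
  have hker : p.restrictScalars R ≤ LinearMap.ker (eval I M 1) := by
    intro x hx
    rw [LinearMap.mem_ker]
    exact (hmem x).mp hx
  have hker2 : LinearMap.ker (eval I M 1) ≤ p.restrictScalars R := by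
    intro x hx
    rw [LinearMap.mem_ker] at hx
    exact (hmem x).mpr hx
  let L := Submodule.liftQ (p.restrictScalars R) (eval I M 1) hker
  have hLinj : Function.Injective L :=
    LinearMap.ker_eq_bot.mp (Submodule.ker_liftQ_eq_bot _ _ _ hker2)
  have hEq : Function.Injective
      ((Submodule.Quotient.restrictScalarsEquiv R p).symm : QK I M → _) :=
    (Submodule.Quotient.restrictScalarsEquiv R p).symm.injective
  exact (hLinj.comp hEq).countable

variable [IsNoetherianRing R]

/-- The record of an endomorphism : its values on the canonical generators, modulo `K`. -/
noncomputable def recordOf (i : ModIdx R)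
    (e : Module.End (AdicCompletion I R) (AdicCompletion I (ModOf R i))) :
    Fin i.1 → QK I (ModOf R i) :=
  fun t => Submodule.Quotient.mk (e (of I (ModOf R i) (gens R i t)))

theorem sub_mem_of_record_eq (i : ModIdx R)
    (e f : Module.End (AdicCompletion I R) (AdicCompletion I (ModOf R i)))
    (h : recordOf I i e = recordOf I i f) :
    ∀ x, (e - f) x ∈ (Kdl I • ⊤ :
      Submodule (AdicCompletion I R) (AdicCompletion I (ModOf R i))) := by
  intro x
  have hS : (⊤ : Submodule (AdicCompletion I R) (AdicCompletion I (ModOf R i))) ≤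
      Submodule.comap (e - f) (Kdl I • ⊤) := by
    have hspan : Submodule.span (AdicCompletion I R)
        (of I (ModOf R i) '' (Set.range (gens R i))) = ⊤ :=
      span_of_image_top I (ModOf R i) (span_gens R i)
    refine le_trans (le_of_eq hspan.symm) (Submodule.span_le.mpr ?_)
    rintro y ⟨z, ⟨t, rfl⟩, rfl⟩
    have ht := congrFun h t
    have : e (of I (ModOf R i) (gens R i t)) - f (of I (ModOf R i) (gens R i t)) ∈
        (Kdl I • ⊤ : Submodule (AdicCompletion I R) (AdicCompletion I (ModOf R i))) :=
      (Submodule.Quotient.eq _).mp ht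
    rw [SetLike.mem_coe, Submodule.mem_comap, LinearMap.sub_apply]
    exact this
  exact hS Submodule.mem_top

end Part7

end Stmt10Aux


open Stmt10Aux in
/-- Over a countable Noetherian local ring of dimension `> 1` whose completion has
uncountably many height-one primes, some finitely generated `R̂`-module is not a direct
summand of any extended module. -/
theorem stmt_10 (R : Type) [CommRing R] [IsLocalRing R] [IsNoetherianRing R]
    [Countable R] (hdim : 1 < ringKrullDim R)
    (hunc : ¬ Countable
      {P : PrimeSpectrum (AdicCompletion (maximalIdeal R) R) // Order.height P = 1}) :
    ∃ (𝓜 : Type) (_ : AddCommGroup 𝓜)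
      (_ : Module (AdicCompletion (maximalIdeal R) R) 𝓜),
      Module.Finite (AdicCompletion (maximalIdeal R) R) 𝓜 ∧
      ¬ ∃ (M : Type) (_ : AddCommGroup M) (_ : Module R M)
        (𝓒 : Type) (_ : AddCommGroup 𝓒)
        (_ : Module (AdicCompletion (maximalIdeal R) R) 𝓒),
        Module.Finite R M ∧
        Nonempty ((𝓜 × 𝓒) ≃ₗ[AdicCompletion (maximalIdeal R) R]
          (AdicCompletion (maximalIdeal R) R ⊗[R] M)) := by
  classical
  set I := maximalIdeal R with hIdef
  -- the "bad" sets of ideals of the completion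
  let BadAt : ModIdx R → Set (Ideal (AdicCompletion I R)) := fun i =>
    {P | ∃ e : Module.End (AdicCompletion I R) (AdicCompletion I (ModOf R i)),
      e * e = e ∧
      Nonempty ((AdicCompletion I R ⧸ P) ≃ₗ[AdicCompletion I R] ↥(LinearMap.range e))}
  let Bad : Set (Ideal (AdicCompletion I R)) := ⋃ i : ModIdx R, BadAt i
  -- countability of the bad set
  have hBadAt : ∀ i : ModIdx R, (BadAt i).Countable := by
    intro i
    haveI := QK_countable I (ModOf R i)
    have hinj : Function.Injective
        (fun (x : ↥(BadAt i)) => recordOf I i (Exists.choose x.2)) := by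
      rintro ⟨P, hP⟩ ⟨P', hP'⟩ h
      apply Subtype.ext
      obtain ⟨he, ⟨g1⟩⟩ := Exists.choose_spec hP
      obtain ⟨hf, ⟨g2⟩⟩ := Exists.choose_spec hP'
      have hrec : recordOf I i (Exists.choose hP) = recordOf I i (Exists.choose hP') := h
      obtain ⟨g3⟩ := range_iso_of_idem I (ModOf R i) (Exists.choose hP) (Exists.choose hP')
        he hf (sub_mem_of_record_eq I i _ _ hrec)
      exact ideal_eq_of_quotEquiv (g1.trans (g3.trans g2.symm))
    exact Set.countable_coe_iff.mp hinj.countable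
  have hBad : Countable ↥Bad := by
    rw [Set.countable_coe_iff]
    exact Set.countable_iUnion hBadAt
  -- choose a height-one prime avoiding the bad set
  have hex : ∃ P : PrimeSpectrum (AdicCompletion I R), P.asIdeal ∉ Bad := by
    by_contra hcon
    push_neg at hcon
    apply hunc
    have hinj : Function.Injective
        (fun (x : {P : PrimeSpectrum (AdicCompletion I R) // Order.height P = 1}) =>
          (⟨x.1.asIdeal, hcon x.1⟩ : ↥Bad)) := by
      intro a b hab
      apply Subtype.ext
      apply PrimeSpectrum.ext
      exact congrArg Subtype.val hab
    exact hinj.countable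
  obtain ⟨P, hPBad⟩ := hex
  refine ⟨AdicCompletion I R ⧸ P.asIdeal, inferInstance, inferInstance,
    Module.Finite.of_surjective (Submodule.mkQ P.asIdeal)
      (Submodule.Quotient.mk_surjective _), ?_⟩
  rintro ⟨M, iM1, iM2, C, iC1, iC2, hMfin, ⟨g⟩⟩
  obtain ⟨i, ⟨eM⟩⟩ := exists_modOf_equiv R M
  have b1 : (AdicCompletion I R ⊗[R] M) ≃ₗ[AdicCompletion I R]
      (AdicCompletion I R ⊗[R] (ModOf R i)) :=
    LinearEquiv.baseChange R (AdicCompletion I R) M (ModOf R i) eM.symm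
  have gg : ((AdicCompletion I R ⧸ P.asIdeal) × C) ≃ₗ[AdicCompletion I R]
      AdicCompletion I (ModOf R i) :=
    g.trans (b1.trans (AdicCompletion.ofTensorProductEquivOfFiniteNoetherian I (ModOf R i)))
  apply hPBad
  refine Set.mem_iUnion.mpr ⟨i, ?_⟩
  exact ⟨idemOf gg, idemOf_idem gg, summand_iso_range_idemOf gg⟩
end

section
/- Let $(\mathcal{R},\mathfrak{m})$ be a Noetherian local domain of dimension $d \geq 2$ with $\mathcal{R}$ normal, let $\mathfrak{a}$ be an ideal of height $d-1$, and let $x \in \mathfrak{m}$ be such that $\sqrt{\mathfrak{a} + x\mathcal{R}} = \mathfrak{m}$. Then the $\mathfrak{a}$-adic completion $(\mathcal{R}_x)^{\wedge_{\mathfrak{a}}}$ of the localization $\mathcal{R}_x$ is not finitely generated as an $\mathcal{R}$-module. -/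
open IsLocalRing

/-- Let `(𝓡, 𝔪)` be a Noetherian normal local domain of dimension `d ≥ 2`, `𝔞` an ideal of
height `d - 1`, and `x ∈ 𝔪` with `√(𝔞 + (x)) = 𝔪`.  Then the `𝔞`-adic completion of the
localization `𝓡ₓ` is not a finitely generated `𝓡`-module. -/
theorem stmt_15 (𝓡 : Type) [CommRing 𝓡] [IsDomain 𝓡] [IsLocalRing 𝓡]
    [IsNoetherianRing 𝓡] [IsIntegrallyClosed 𝓡]
    (d : ℕ) (hd : 2 ≤ d) (hdim : ringKrullDim 𝓡 = d)
    (𝔞 : Ideal 𝓡)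
    (hht : sInf (Order.height '' {p : PrimeSpectrum 𝓡 | 𝔞 ≤ p.asIdeal})
      = (d - 1 : ℕ))
    (x : 𝓡) (hx : x ∈ maximalIdeal 𝓡)
    (hrad : (𝔞 + Ideal.span {x}).radical = maximalIdeal 𝓡) :
    ¬ Module.Finite 𝓡 (RestrictScalars 𝓡 (Localization.Away x)
      (AdicCompletion (𝔞.map (algebraMap 𝓡 (Localization.Away x)))
        (Localization.Away x))) := by
  intro hfin
  set S := Localization.Away x with hS
  set I : Ideal S := 𝔞.map (algebraMap 𝓡 S) with hIdef
  -- Step 1 : x ∉ 𝔞.radical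
  have hxnr : x ∉ 𝔞.radical := by
    intro hxr
    have hradeq : 𝔞.radical = maximalIdeal 𝓡 := by
      refine le_antisymm ?_ ?_
      · rw [← hrad]; exact Ideal.radical_mono le_sup_left
      · rw [← hrad]
        exact Ideal.radical_le_radical_iff.mpr
          (sup_le Ideal.le_radical
            (Ideal.span_le.mpr (Set.singleton_subset_iff.mpr hxr)))
    -- the set of primes over 𝔞 is the closed point
    let pt : PrimeSpectrum 𝓡 := ⟨maximalIdeal 𝓡, inferInstance⟩
    have hset : {p : PrimeSpectrum 𝓡 | 𝔞 ≤ p.asIdeal} = {pt} := by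
      ext p
      constructor
      · intro hp
        have h1 : maximalIdeal 𝓡 ≤ p.asIdeal := by
          rw [← hradeq]; exact (p.isPrime.radical_le_iff).mpr hp
        have h2 : p.asIdeal ≤ maximalIdeal 𝓡 :=
          IsLocalRing.le_maximalIdeal p.isPrime.ne_top
        exact PrimeSpectrum.ext (le_antisymm h2 h1)
      · rintro rfl
        show 𝔞 ≤ maximalIdeal 𝓡
        rw [← hradeq]; exact Ideal.le_radical
    rw [hset, Set.image_singleton, csInf_singleton] at hht
    -- height pt = krullDim
    have hmax : ∀ q : PrimeSpectrum 𝓡, q ≤ pt := fun q =>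
      (PrimeSpectrum.asIdeal_le_asIdeal q pt).mp
        (IsLocalRing.le_maximalIdeal q.isPrime.ne_top)
    have hkd : ringKrullDim 𝓡 = (Order.height pt : WithBot ℕ∞) := by
      rw [ringKrullDim, Order.krullDim_eq_iSup_height]
      refine le_antisymm (iSup_le fun a => ?_) (le_iSup (fun a => (Order.height a : WithBot ℕ∞)) pt)
      exact_mod_cast Order.height_mono (hmax a)
    rw [hdim, hht] at hkd
    norm_cast at hkd
    omega
  -- Step 2 : I ≠ ⊤
  have hInetop : I ≠ ⊤ := by
    have hex : ¬ ∀ J ∈ {J : Ideal 𝓡 | 𝔞 ≤ J ∧ J.IsPrime}, x ∈ J := by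
      intro hall
      exact hxnr (by rw [Ideal.radical_eq_sInf]; exact Ideal.mem_sInf.mpr fun {J} hJ => hall J hJ)
    push_neg at hex
    obtain ⟨p, ⟨h𝔞p, hpprime⟩, hxp⟩ := hex
    have hdisj : Disjoint ((Submonoid.powers x : Submonoid 𝓡) : Set 𝓡) (p : Set 𝓡) := by
      rw [Set.disjoint_left]
      rintro a ⟨n, rfl⟩ hap
      exact hxp (hpprime.mem_of_pow_mem n hap)
    have hmapp : (p.map (algebraMap 𝓡 S)).IsPrime :=
      IsLocalization.isPrime_of_isPrime_disjoint (Submonoid.powers x) S p hpprime hdisj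
    intro htop
    exact hmapp.ne_top (eq_top_iff.mpr (htop ▸ Ideal.map_mono h𝔞p))
  -- Step 3 : the completion is nontrivial
  have h01 : (0 : AdicCompletion I S) ≠ 1 := by
    intro h
    have := congrArg (AdicCompletion.evalₐ I 1) h
    rw [map_zero, map_one] at this
    exact hInetop (by simpa using (Ideal.Quotient.zero_eq_one_iff.mp this))
  -- Step 4 : the contradiction
  set A := RestrictScalars 𝓡 S (AdicCompletion I S) with hA
  haveI : Module.Finite 𝓡 A := hfin
  haveI : Nontrivial A := ⟨⟨(0 : AdicCompletion I S), (1 : AdicCompletion I S), h01⟩⟩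
  have hint : Algebra.IsIntegral 𝓡 A := @Algebra.IsIntegral.of_finite 𝓡 A _ _ _ hfin
  set f : 𝓡 →+* A := algebraMap 𝓡 A with hf
  let y : A := (RestrictScalars.ringEquiv 𝓡 S (AdicCompletion I S)).symm
    (algebraMap S (AdicCompletion I S) (IsLocalization.Away.invSelf x))
  have hxy : f x * y = 1 := by
    show algebraMap S (AdicCompletion I S) (algebraMap 𝓡 S x) *
      algebraMap S (AdicCompletion I S) (IsLocalization.Away.invSelf x) = 1
    rw [← map_mul, IsLocalization.Away.mul_invSelf, map_one]
  obtain ⟨p, hmonic, hp⟩ := hint.isIntegral y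
  set n := p.natDegree with hn
  have hpow : ∀ i, i ≤ n → (f x) ^ n * y ^ i = (f x) ^ (n - i) := by
    intro i hi
    calc (f x) ^ n * y ^ i = (f x) ^ (n - i) * ((f x) ^ i * y ^ i) := by
          rw [← mul_assoc, ← pow_add, Nat.sub_add_cancel hi]
      _ = (f x) ^ (n - i) * (f x * y) ^ i := by rw [mul_pow]
      _ = (f x) ^ (n - i) := by rw [hxy, one_pow, mul_one]
  have key : f (∑ i ∈ Finset.range (n + 1), p.coeff i * x ^ (n - i)) = 0 := by
    have h1 : (Polynomial.aeval y) p = 0 := hp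
    have h2 := congrArg (fun a => (f x) ^ n * a) h1
    simp only [mul_zero] at h2
    rw [Polynomial.aeval_eq_sum_range] at h2
    erw [Finset.mul_sum] at h2
    rw [map_sum, ← h2]
    refine Finset.sum_congr rfl fun i hi => ?_
    have hin : i ≤ n := Nat.lt_succ_iff.mp (Finset.mem_range.mp hi)
    rw [map_mul, map_pow]
    rw [Algebra.smul_def, mul_left_comm, hpow i hin]
  -- the element is a unit
  set u : 𝓡 := ∑ i ∈ Finset.range (n + 1), p.coeff i * x ^ (n - i) with hu
  have huunit : IsUnit u := by
    by_contra hnu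
    have humem : u ∈ maximalIdeal 𝓡 := (IsLocalRing.mem_maximalIdeal u).mpr (mem_nonunits_iff.mpr hnu)
    have hsum : ∑ i ∈ Finset.range n, p.coeff i * x ^ (n - i) ∈ maximalIdeal 𝓡 := by
      refine Ideal.sum_mem _ fun i hi => ?_
      have : n - i = (n - i - 1) + 1 := by
        have := Finset.mem_range.mp hi; omega
      rw [this, pow_succ, ← mul_assoc]
      exact Ideal.mul_mem_left _ _ hx
    have h1mem : (1 : 𝓡) ∈ maximalIdeal 𝓡 := by
      have : u - ∑ i ∈ Finset.range n, p.coeff i * x ^ (n - i) ∈ maximalIdeal 𝓡 :=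
        Submodule.sub_mem _ humem hsum
      rwa [hu, Finset.sum_range_succ, add_sub_cancel_left, hmonic.coeff_natDegree,
        Nat.sub_self, pow_zero, one_mul] at this
    exact (Ideal.ne_top_iff_one _).mp (IsLocalRing.maximalIdeal.isMaximal 𝓡).ne_top h1mem
  have : IsUnit (0 : A) := key ▸ huunit.map f
  rw [isUnit_zero_iff] at this
  exact h01 this
end
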